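/- If X ∈ {0,1}^{N×N} is positive semidefinite with rank(X) ≤ r, then there exists a matrix Z ∈ {0,1}^{N×r} with each row summing to 0 or 1 (a partial assignment matrix) such that X = ZZᵀ. -/

import Mathlib

open Finset

/-- a 0-1 PSD matrix of rank at most r equals Z·Zᵀ for a partial
assignment matrix Z (binary with each row summing to 0 or 1). -/
theorem stmt_4 (N r : ℕ) (X : Matrix (Fin N) (Fin N) ℝ)
    (hbin : ∀ i j, X i j = 0 ∨ X i j = 1)
    (hpsd : X.PosSemidef) (hrank : X.rank ≤ r) :
    ∃ Z : Matrix (Fin N) (Fin r) ℝ,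
      (∀ i k, Z i k = 0 ∨ Z i k = 1) ∧
      (∀ i, (∑ k, Z i k = 0) ∨ (∑ k, Z i k = 1)) ∧
      X = Z * Z.transpose := by
  classical
  have hsym : ∀ i j, X j i = X i j := by
    intro i j
    have := hpsd.1.apply i j
    simpa using this
  -- quadratic form on three coordinates
  have hq3 : ∀ (i j k : Fin N) (a b c : ℝ),
      0 ≤ a * (X i i * a) + (b * (X j i * a) + (c * (X k i * a) + (a * (X i j * b) +
        (b * (X j j * b) + (c * (X k j * b) + (a * (X i k * c) + (b * (X j k * c)
          + c * (X k k * c)))))))) := by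
    intro i j k a b c
    have := hpsd.dotProduct_mulVec_nonneg (Pi.single i a + Pi.single j b + Pi.single k c)
    simp [Matrix.mulVec_add, Matrix.mulVec_single, add_dotProduct,
      single_dotProduct, dotProduct_add, mul_add, add_assoc] at this
    linarith
  -- zero diagonal forces zero row
  have hzero : ∀ i j, X i i = 0 → X i j = 0 := by
    intro i j h0
    rcases hbin i j with h | h
    · exact h
    · exfalso
      have hji : X j i = 1 := by rw [hsym]; exact h
      have := hq3 i j j (-2) 1 0
      have hjj : X j j ≤ 1 := by rcases hbin j j with h' | h' <;> simp [h']
      rw [h0, h, hji] at this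
      nlinarith
  have hdiag : ∀ i j, X i j = 1 → X i i = 1 := by
    intro i j h
    rcases hbin i i with h' | h'
    · exact absurd (hzero i j h') (by rw [h]; norm_num)
    · exact h'
  -- transitivity
  have htrans : ∀ i j k, X i j = 1 → X j k = 1 → X i k = 1 := by
    intro i j k hij hjk
    by_cases hik : i = k
    · subst hik; exact hdiag i j hij
    rcases hbin i k with h | h
    · exfalso
      have hii : X i i = 1 := hdiag i j hij
      have hjj : X j j = 1 := hdiag j k hjk
      have hkk : X k k = 1 := hdiag k j (by rw [hsym]; exact hjk)
      have hji : X j i = 1 := by rw [hsym]; exact hij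
      have hkj : X k j = 1 := by rw [hsym]; exact hjk
      have hki : X k i = 0 := by rw [hsym]; exact h
      have := hq3 i j k 1 (-1) 1
      rw [hii, hjj, hkk, hij, hji, hjk, hkj, h, hki] at this
      nlinarith
    · exact h
  -- class sets and canonical representatives
  set S : Fin N → Finset (Fin N) := fun i => Finset.univ.filter (fun j => X i j = 1) with hS
  have hSmem : ∀ i j, j ∈ S i ↔ X i j = 1 := by intro i j; simp [hS]
  have hSeq : ∀ i j, X i j = 1 → S i = S j := by
    intro i j hij
    ext t
    rw [hSmem, hSmem]
    constructor
    · intro h; exact htrans j i t (by rw [hsym]; exact hij) h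
    · intro h; exact htrans i j t hij h
  set C : Fin N → Fin N := fun i =>
    if h : (S i).Nonempty then (S i).min' h else i with hCdef
  have hCmem : ∀ i, X i i = 1 → X i (C i) = 1 := by
    intro i h
    have hne : (S i).Nonempty := ⟨i, (hSmem i i).2 h⟩
    have : C i ∈ S i := by
      rw [hCdef]; simp only [dif_pos hne]; exact (S i).min'_mem hne
    exact (hSmem i _).1 this
  have hCeq : ∀ i j, X i j = 1 → C i = C j := by
    intro i j hij
    have h := hSeq i j hij
    have hne : (S j).Nonempty := ⟨j, (hSmem j j).2 (hdiag j i (by rw [hsym]; exact hij))⟩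
    rw [hCdef]
    simp only [h, dif_pos hne]
  have hCdiag : ∀ i, X i i = 1 → X (C i) (C i) = 1 := by
    intro i h
    rcases hbin (C i) (C i) with h' | h'
    · exact absurd (by rw [hsym]; exact hzero (C i) i h' : X i (C i) = 0)
        (by rw [hCmem i h]; norm_num)
    · exact h'
  have hCC : ∀ i, X i i = 1 → C (C i) = C i := by
    intro i h
    exact (hCeq i (C i) (hCmem i h)).symm
  have hXiff : ∀ i j, X i i = 1 → X j j = 1 → (X i j = 1 ↔ C i = C j) := by
    intro i j hi hj
    constructor
    · exact hCeq i j
    · intro h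
      have h1 : X i (C i) = 1 := hCmem i hi
      have h2 : X (C j) j = 1 := by rw [hsym]; exact hCmem j hj
      exact htrans i (C i) j h1 (by rw [h]; exact h2)
  -- representatives
  set reps : Finset (Fin N) :=
    (Finset.univ.filter (fun i => X i i = 1)).image C with hrepsdef
  have hrepsmem : ∀ i, X i i = 1 → C i ∈ reps := by
    intro i h
    rw [hrepsdef]
    exact Finset.mem_image.2 ⟨i, by simpa using h, rfl⟩
  have hrepfix : ∀ a ∈ reps, X a a = 1 ∧ C a = a := by
    intro a ha
    rw [hrepsdef] at ha
    rcases Finset.mem_image.1 ha with ⟨i, hi, rfl⟩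
    have hi' : X i i = 1 := by simpa using hi
    exact ⟨hCdiag i hi', hCC i hi'⟩
  have hrepdist : ∀ a ∈ reps, ∀ b ∈ reps, X a b = 1 → a = b := by
    intro a ha b hb hab
    have h1 := hrepfix a ha
    have h2 := hrepfix b hb
    rw [← h1.2, ← h2.2]
    exact hCeq a b hab
  -- columns of representatives are linearly independent
  have hli : LinearIndependent ℝ (fun a : {x // x ∈ reps} => X.transpose a.1) := by
    rw [Fintype.linearIndependent_iff]
    intro g hg a
    have := congrFun hg a.1
    simp only [Finset.sum_apply, Pi.smul_apply, Matrix.transpose_apply, smul_eq_mul,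
      Pi.zero_apply] at this
    rw [Finset.sum_eq_single a] at this
    · rw [(hrepfix a.1 a.2).1, mul_one] at this
      exact this
    · intro b _ hb
      have : X a.1 b.1 = 0 := by
        rcases hbin a.1 b.1 with h | h
        · exact h
        · exact absurd (Subtype.ext (hrepdist a.1 a.2 b.1 b.2 h)) (Ne.symm hb)
      rw [this]; ring
    · intro h; exact absurd (Finset.mem_univ a) h
  have hcard : reps.card ≤ r := by
    have h1 : Module.finrank ℝ (Submodule.span ℝ
        (Set.range (fun a : {x // x ∈ reps} => X.transpose a.1))) = reps.card := by
      rw [finrank_span_eq_card hli, Fintype.card_coe]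
    have h2 : Submodule.span ℝ (Set.range (fun a : {x // x ∈ reps} => X.transpose a.1))
        ≤ Submodule.span ℝ (Set.range X.transpose) := by
      apply Submodule.span_mono
      rintro _ ⟨a, rfl⟩
      exact ⟨a.1, rfl⟩
    have h3 := Submodule.finrank_mono h2
    rw [h1] at h3
    calc reps.card ≤ Module.finrank ℝ (Submodule.span ℝ (Set.range X.transpose)) := h3
      _ = X.rank := (Matrix.rank_eq_finrank_span_cols X).symm
      _ ≤ r := hrank
  -- embedding of representatives into Fin r
  obtain ⟨e⟩ : Nonempty ({x // x ∈ reps} ↪ Fin r) := by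
    rw [Function.Embedding.nonempty_iff_card_le, Fintype.card_coe, Fintype.card_fin]
    exact hcard
  -- the assignment matrix
  refine ⟨fun i k => if h : X i i = 1 then (if e ⟨C i, hrepsmem i h⟩ = k then 1 else 0) else 0,
    ?_, ?_, ?_⟩
  · intro i k
    by_cases h : X i i = 1
    · by_cases h2 : e ⟨C i, hrepsmem i h⟩ = k <;> simp [h, h2]
    · simp [h]
  · intro i
    by_cases h : X i i = 1
    · right
      simp only [dif_pos h]
      rw [Finset.sum_ite_eq]
      simp
    · left; simp [h]
  · ext i j
    erw [Matrix.mul_apply]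
    simp only [Matrix.transpose, Matrix.of_apply]
    by_cases hi : X i i = 1
    · by_cases hj : X j j = 1
      · simp only [dif_pos hi, dif_pos hj]
        have : ∀ k, (if e ⟨C i, hrepsmem i hi⟩ = k then (1:ℝ) else 0) *
            (if e ⟨C j, hrepsmem j hj⟩ = k then 1 else 0) =
            if e ⟨C i, hrepsmem i hi⟩ = k then
              (if e ⟨C j, hrepsmem j hj⟩ = k then 1 else 0) else 0 := by
          intro k; split <;> simp
        rw [Finset.sum_congr rfl (fun k _ => this k), Finset.sum_ite_eq]
        simp only [Finset.mem_univ, if_true]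
        have hiff : X i j = 1 ↔ e ⟨C j, hrepsmem j hj⟩ = e ⟨C i, hrepsmem i hi⟩ := by
          rw [hXiff i j hi hj]
          constructor
          · intro h; exact congrArg e (Subtype.ext h.symm)
          · intro h
            have := e.injective h
            exact (Subtype.ext_iff.1 this).symm
        rcases hbin i j with h | h
        · rw [h, if_neg]
          intro hc
          exact absurd (hiff.2 hc) (by rw [h]; norm_num)
        · rw [h, if_pos (hiff.1 h)]
      · have h0 : X j j = 0 := by rcases hbin j j with h | h; exact h; exact absurd h hj
        have : X i j = 0 := by rw [hsym]; exact hzero j i h0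
        rw [this]
        simp [hj]
    · have h0 : X i i = 0 := by rcases hbin i i with h | h; exact h; exact absurd h hi
      rw [hzero i j h0]
      simp [hi]
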